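/- Let G be a group and x1, x2, x3, x4, x5 ∈ G. Then the five relations x1 = x4 x3 x4⁻¹, x2 = x4 x3 x2 x3⁻¹ x4⁻¹, x3 = x4 x3 x2 x1 x2⁻¹ x3⁻¹ x4⁻¹, x4 = x5, and x5 = x5 x4 x3 x2 x1 x4 x1⁻¹ x2⁻¹ x3⁻¹ x4⁻¹ x5⁻¹ hold simultaneously if and only if the four relations x4 x3 x2 = x2 x4 x3, x3 x2 x4 x3 x4 = x4 x3 x2 x4 x3, x1 = x4 x3 x4⁻¹, and x4 = x5 hold. -/

import Mathlib

theorem stmt_2 {G : Type*} [Group G] (x1 x2 x3 x4 x5 : G) :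
    (x1 = x4 * x3 * x4⁻¹ ∧
     x2 = x4 * x3 * x2 * x3⁻¹ * x4⁻¹ ∧
     x3 = x4 * x3 * x2 * x1 * x2⁻¹ * x3⁻¹ * x4⁻¹ ∧
     x4 = x5 ∧
     x5 = x5 * x4 * x3 * x2 * x1 * x4 * x1⁻¹ * x2⁻¹ * x3⁻¹ * x4⁻¹ * x5⁻¹) ↔
    (x4 * x3 * x2 = x2 * x4 * x3 ∧
     x3 * x2 * x4 * x3 * x4 = x4 * x3 * x2 * x4 * x3 ∧
     x1 = x4 * x3 * x4⁻¹ ∧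
     x4 = x5) := by
  constructor
  · rintro ⟨h1, h2, h3, h4, h5⟩
    subst h1; subst h4
    have A : x4 * x3 * x2 = x2 * x4 * x3 := by
      nth_rewrite 2 [h2]
      group
    have B : x3 * x2 * x4 * x3 * x4 = x4 * x3 * x2 * x4 * x3 := by
      calc x3 * x2 * x4 * x3 * x4 = x3 * (x2 * x4 * x3) * x4 := by group
        _ = x3 * (x4 * x3 * x2) * x4 := by rw [A]
        _ = x3 * (x4 * x3 * x2 * x4) := by group
        _ = x4 * x3 * x2 * x4 * x3 := by nth_rewrite 1 [h3]; group
    exact ⟨A, B, rfl, rfl⟩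
  · rintro ⟨A, B, h1, h4⟩
    subst h1; subst h4
    refine ⟨rfl, ?_, ?_, rfl, ?_⟩
    · rw [A]; group
    · have hC : x3 * (x4 * x3 * x2) * x4 = x4 * x3 * x2 * x4 * x3 := by
        nth_rewrite 1 [A]
        simpa only [mul_assoc] using B
      have h := congrArg (· * (x4⁻¹ * (x4 * x3 * x2)⁻¹)) hC
      group at h ⊢
      exact h
    · have h := congrArg (fun t => x4 * t * (x4 * x3 * x2 * x4 * x3)⁻¹) B
      have h2 := congrArg (fun t => x4 * t * x4⁻¹) h
      group at h2 ⊢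
      exact h2.symm
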